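/- Fix μ ∈ ℝ. The map q ↦ B_μ(F_μ⁻¹(q)) is twice differentiable on (0,1) and, for every x ∈ ℝ, its second derivative evaluated at q = F_μ(x) equals −ρ/(σ·φ(Φ⁻¹(F_μ(x)))) + 1/(σ²·f_μ(x)). -/

import Mathlib

open MeasureTheory ProbabilityTheory Set Filter Topology

noncomputable def stdphi (x : ℝ) : ℝ := Real.exp (-(x ^ 2) / 2) / Real.sqrt (2 * Real.pi)

noncomputable def stdPhi (x : ℝ) : ℝ := ∫ t in Iic x, stdphi t

noncomputable def stdPhiInv : ℝ → ℝ := Function.invFun stdPhi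

noncomputable def stdPhiE (c : EReal) (x s : ℝ) : ℝ :=
  if c = ⊤ then 1 else if c = ⊥ then 0 else stdPhi ((c.toReal - x) / s)

def truncOrdered {k : ℕ} (a b : Fin k → EReal) : Prop :=
  (∀ i, a i < b i) ∧ ∀ i j : Fin k, i < j → b i < a j

def truncSet {k : ℕ} (a b : Fin k → EReal) : Set ℝ :=
  {x : ℝ | ∃ i, a i < (x : EReal) ∧ (x : EReal) < b i}

noncomputable def truncSum {k : ℕ} (a b : Fin k → EReal) (s x : ℝ) : ℝ :=
  ∑ i, (stdPhiE (b i) x s - stdPhiE (a i) x s)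

noncomputable def condPDF {k : ℕ} (a b : Fin k → EReal) (σ τ μ x : ℝ) : ℝ :=
  (1 / σ) * stdphi ((x - μ) / σ) * truncSum a b τ x
    / truncSum a b (Real.sqrt (σ ^ 2 + τ ^ 2)) μ

noncomputable def Fmu {k : ℕ} (a b : Fin k → EReal) (σ τ μ x : ℝ) : ℝ :=
  ∫ u in Iic x, condPDF a b σ τ μ u

/-- `G_μ(x,v) = Φ((x - (ρ²μ + (1-ρ²)v))/(σρ))` with `ρ² = τ²/(σ²+τ²)`. -/
noncomputable def Gfun (σ τ μ x v : ℝ) : ℝ :=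
  stdPhi ((x - (τ ^ 2 / (σ ^ 2 + τ ^ 2) * μ + (1 - τ ^ 2 / (σ ^ 2 + τ ^ 2)) * v)) /
    (σ * Real.sqrt (τ ^ 2 / (σ ^ 2 + τ ^ 2))))

/-- `G_μ(x,v)` for an extended-real `v`, with the natural conventions at `±∞`. -/
noncomputable def GfunE (σ τ μ x : ℝ) (c : EReal) : ℝ :=
  if c = ⊤ then 0 else if c = ⊥ then 1 else Gfun σ τ μ x c.toReal

/-- `h(v)` from Lemma `le_dmu_formula`. -/
noncomputable def hfun {k : ℕ} (a b : Fin k → EReal) (σ τ μ v : ℝ) : ℝ :=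
  (1 / Real.sqrt (σ ^ 2 + τ ^ 2)) * stdphi ((v - μ) / Real.sqrt (σ ^ 2 + τ ^ 2)) /
    truncSum a b (Real.sqrt (σ ^ 2 + τ ^ 2)) μ

/-- `h(v)` for an extended-real `v`, with the convention `φ(±∞) = 0`. -/
noncomputable def hfunE {k : ℕ} (a b : Fin k → EReal) (σ τ μ : ℝ) (c : EReal) : ℝ :=
  if c = ⊤ then 0 else if c = ⊥ then 0 else hfun a b σ τ μ c.toReal

/-- `l(x,v)` from Lemma `le_dens_dx`. -/
noncomputable def lfun {k : ℕ} (a b : Fin k → EReal) (τ x v : ℝ) : ℝ :=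
  (1 / τ) * stdphi ((v - x) / τ) / truncSum a b τ x

/-- `l(x,v)` for an extended-real `v`, with the convention `φ(±∞) = 0`. -/
noncomputable def lfunE {k : ℕ} (a b : Fin k → EReal) (τ x : ℝ) (c : EReal) : ℝ :=
  if c = ⊤ then 0 else if c = ⊥ then 0 else lfun a b τ x c.toReal

/-- The function `B_μ(x)` from the proof of Proposition 1. -/
noncomputable def Bfun {k : ℕ} (a b : Fin k → EReal) (σ τ μ x : ℝ) : ℝ :=
  Real.sqrt (τ ^ 2 / (σ ^ 2 + τ ^ 2)) / σ * stdphi (stdPhiInv (Fmu a b σ τ μ x))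
    - condPDF a b σ τ μ x
    + ∑ i, (hfunE a b σ τ μ (b i) * (Fmu a b σ τ μ x - GfunE σ τ μ x (b i))
        - hfunE a b σ τ μ (a i) * (Fmu a b σ τ μ x - GfunE σ τ μ x (a i)))


set_option linter.unusedSectionVars false
set_option linter.unusedVariables false
set_option linter.unreachableTactic false
set_option linter.unusedTactic false

lemma stdphi_pos (x : ℝ) : 0 < stdphi x :=
  div_pos (Real.exp_pos _) (Real.sqrt_pos.2 (by positivity))

lemma hasDerivAt_stdphi (x : ℝ) : HasDerivAt stdphi (-x * stdphi x) x := by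
  have h : HasDerivAt (fun y : ℝ => -(y ^ 2) / 2) (-x) x := by
    have := ((hasDerivAt_pow 2 x).neg).div_const 2
    simpa using this.congr_deriv (by ring)
  have := (h.exp).div_const (Real.sqrt (2 * Real.pi))
  have h2 : HasDerivAt stdphi (Real.exp (-(x^2)/2) * (-x) / Real.sqrt (2*Real.pi)) x := this
  convert h2 using 1
  unfold stdphi; ring

lemma continuous_stdphi : Continuous stdphi := by
  unfold stdphi; fun_prop

lemma integrable_stdphi : Integrable stdphi := by
  have h : Integrable (fun x : ℝ => Real.exp (-(1/2 : ℝ) * x ^ 2)) :=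
    integrable_exp_neg_mul_sq (by norm_num)
  have : stdphi = fun x => Real.exp (-(1/2 : ℝ) * x ^ 2) * (Real.sqrt (2 * Real.pi))⁻¹ := by
    funext x; rw [stdphi, div_eq_mul_inv]; norm_num; left; ring
  rw [this]; exact h.mul_const _

lemma integral_stdphi : ∫ x, stdphi x = 1 := by
  have h : ∫ x : ℝ, Real.exp (-(1/2 : ℝ) * x ^ 2) = Real.sqrt (Real.pi / (1/2)) :=
    integral_gaussian (1/2)
  have hs : stdphi = fun x => Real.exp (-(1/2 : ℝ) * x ^ 2) * (Real.sqrt (2 * Real.pi))⁻¹ := by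
    funext x; rw [stdphi, div_eq_mul_inv]; norm_num; left; ring
  rw [hs, integral_mul_const, h]
  rw [show Real.pi / (1/2) = 2 * Real.pi by ring]
  rw [mul_inv_cancel₀ (by positivity)]

section CDFHelper
variable {g : ℝ → ℝ} (hc : Continuous g) (hp : ∀ x, 0 < g x) (hi : Integrable g)
include hc hi

lemma aux_Iic_sub (x y : ℝ) :
    (∫ u in Iic y, g u) - ∫ u in Iic x, g u = ∫ u in x..y, g u := by
  rw [intervalIntegral.integral_Iic_sub_Iic hi.integrableOn hi.integrableOn]

lemma aux_cdf_hasDerivAt (x : ℝ) :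
    HasDerivAt (fun y => ∫ u in Iic y, g u) (g x) x := by
  have h1 : HasDerivAt (fun y => ∫ u in (0:ℝ)..y, g u) (g x) x := by
    refine intervalIntegral.integral_hasDerivAt_right
      (hi.intervalIntegrable) ?_ hc.continuousAt
    exact hc.stronglyMeasurableAtFilter _ _
  have h2 := h1.add_const (∫ u in Iic (0:ℝ), g u)
  refine h2.congr_of_eventuallyEq (Eventually.of_forall fun y => ?_)
  have := aux_Iic_sub hc hi (0:ℝ) y
  show (∫ u in Iic y, g u) = (∫ u in (0:ℝ)..y, g u) + ∫ u in Iic (0:ℝ), g u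
  linarith

include hp

lemma aux_cdf_strictMono : StrictMono (fun y => ∫ u in Iic y, g u) := by
  intro x y hxy
  have hpos : 0 < ∫ u in x..y, g u :=
    intervalIntegral.intervalIntegral_pos_of_pos_on hi.intervalIntegrable
      (fun u _ => hp u) hxy
  have := aux_Iic_sub hc hi x y
  simp only
  linarith

lemma aux_cdf_pos (x : ℝ) : 0 < ∫ u in Iic x, g u := by
  have h1 : (0:ℝ) ≤ ∫ u in Iic (x-1), g u :=
    setIntegral_nonneg measurableSet_Iic (fun u _ => (hp u).le)
  have h2 := aux_cdf_strictMono hc hp hi (show x - 1 < x by linarith)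
  simp only at h2; linarith

lemma aux_cdf_lt (x : ℝ) : (∫ u in Iic x, g u) < ∫ u, g u := by
  have h2 := aux_cdf_strictMono hc hp hi (show x < x + 1 by linarith)
  have h3 : (∫ u in Iic (x+1), g u) ≤ ∫ u, g u :=
    setIntegral_le_integral hi (Eventually.of_forall fun u => (hp u).le)
  simp only at h2; linarith

end CDFHelper

lemma aux_tendsto_Iic_atBot {g : ℝ → ℝ} (hi : Integrable g) :
    Tendsto (fun x => ∫ u in Iic x, g u) atBot (𝓝 0) := by
  have key : Tendsto (fun x : ℝ => ∫ u, (Iic x).indicator g u) atBot (𝓝 (∫ _u : ℝ, (0:ℝ))) := by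
    refine tendsto_integral_filter_of_dominated_convergence (fun u => |g u|)
      (Eventually.of_forall fun x => hi.aestronglyMeasurable.indicator measurableSet_Iic)
      (Eventually.of_forall fun x => Eventually.of_forall fun u => ?_)
      hi.abs (Eventually.of_forall fun u => ?_)
    · by_cases h : u ∈ Iic x <;> simp [indicator, h, abs_nonneg]
    · refine tendsto_const_nhds.congr' ?_
      filter_upwards [eventually_le_atBot (u - 1)] with x hx
      have : u ∉ Iic x := by simp only [mem_Iic]; linarith
      simp [indicator, this]
  simp only [integral_zero] at key
  refine key.congr fun x => integral_indicator measurableSet_Iic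

lemma aux_tendsto_Iic_atTop {g : ℝ → ℝ} (hi : Integrable g) :
    Tendsto (fun x => ∫ u in Iic x, g u) atTop (𝓝 (∫ u, g u)) := by
  have key : Tendsto (fun x : ℝ => ∫ u, (Iic x).indicator g u) atTop (𝓝 (∫ u, g u)) := by
    refine tendsto_integral_filter_of_dominated_convergence (fun u => |g u|)
      (Eventually.of_forall fun x => hi.aestronglyMeasurable.indicator measurableSet_Iic)
      (Eventually.of_forall fun x => Eventually.of_forall fun u => ?_)
      hi.abs (Eventually.of_forall fun u => ?_)
    · by_cases h : u ∈ Iic x <;> simp [indicator, h, abs_nonneg]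
    · refine tendsto_const_nhds.congr' ?_
      filter_upwards [eventually_ge_atTop u] with x hx
      have : u ∈ Iic x := by simpa using hx
      simp [indicator, this]
  refine key.congr fun x => integral_indicator measurableSet_Iic

lemma aux_rightinv_continuousAt {F g : ℝ → ℝ} (hF : StrictMono F)
    {q : ℝ} (hq : q ∈ Ioo (0:ℝ) 1) (hg : ∀ p ∈ Ioo (0:ℝ) 1, F (g p) = p) :
    ContinuousAt g q := by
  obtain ⟨hq0, hq1⟩ := hq
  rw [Metric.continuousAt_iff]
  intro ε hε
  set x₀ := g q with hx₀
  have hFx₀ : F x₀ = q := hg q ⟨hq0, hq1⟩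
  have h1 : F (x₀ - ε) < q := by rw [← hFx₀]; exact hF (by linarith)
  have h2 : q < F (x₀ + ε) := by rw [← hFx₀]; exact hF (by linarith)
  refine ⟨min (min (q - F (x₀ - ε)) (F (x₀ + ε) - q)) (min q (1 - q)), by refine lt_min (lt_min ?_ ?_) (lt_min ?_ ?_) <;> linarith, ?_⟩
  intro p hp
  rw [Real.dist_eq] at hp ⊢
  have hab := abs_lt.1 hp
  have hp0 : 0 < p := by
    have := min_le_right (min (q - F (x₀ - ε)) (F (x₀ + ε) - q)) (min q (1 - q))
    have := min_le_left q (1 - q)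
    linarith
  have hp1 : p < 1 := by
    have := min_le_right (min (q - F (x₀ - ε)) (F (x₀ + ε) - q)) (min q (1 - q))
    have := min_le_right q (1 - q)
    linarith
  have hFgp : F (g p) = p := hg p ⟨hp0, hp1⟩
  have hl : F (x₀ - ε) < F (g p) := by
    have h3 := min_le_left (min (q - F (x₀ - ε)) (F (x₀ + ε) - q)) (min q (1 - q))
    have h4 := min_le_left (q - F (x₀ - ε)) (F (x₀ + ε) - q)
    rw [hFgp]; linarith
  have hr : F (g p) < F (x₀ + ε) := by
    have h3 := min_le_left (min (q - F (x₀ - ε)) (F (x₀ + ε) - q)) (min q (1 - q))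
    have h4 := min_le_right (q - F (x₀ - ε)) (F (x₀ + ε) - q)
    rw [hFgp]; linarith
  have hl' : x₀ - ε < g p := hF.lt_iff_lt.1 hl
  have hr' : g p < x₀ + ε := hF.lt_iff_lt.1 hr
  rw [abs_lt]; constructor <;> linarith

lemma aux_rightinv_hasDerivAt {F g : ℝ → ℝ} (hF : StrictMono F)
    {q f' : ℝ} (hq : q ∈ Ioo (0:ℝ) 1) (hg : ∀ p ∈ Ioo (0:ℝ) 1, F (g p) = p)
    (hd : HasDerivAt F f' (g q)) (hf' : f' ≠ 0) :
    HasDerivAt g f'⁻¹ q := by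
  refine HasDerivAt.of_local_left_inverse (aux_rightinv_continuousAt hF hq hg) hd hf' ?_
  filter_upwards [isOpen_Ioo.mem_nhds hq] with p hp using hg p hp

lemma hasDerivAt_stdPhi (x : ℝ) : HasDerivAt stdPhi (stdphi x) x :=
  aux_cdf_hasDerivAt continuous_stdphi integrable_stdphi x

lemma continuous_stdPhi : Continuous stdPhi := by
  have : Differentiable ℝ stdPhi := fun x => (hasDerivAt_stdPhi x).differentiableAt
  exact this.continuous

lemma stdPhi_strictMono : StrictMono stdPhi :=
  aux_cdf_strictMono continuous_stdphi stdphi_pos integrable_stdphi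

lemma stdPhi_pos (x : ℝ) : 0 < stdPhi x :=
  aux_cdf_pos continuous_stdphi stdphi_pos integrable_stdphi x

lemma stdPhi_lt_one (x : ℝ) : stdPhi x < 1 := by
  have := aux_cdf_lt continuous_stdphi stdphi_pos integrable_stdphi x
  rwa [integral_stdphi] at this

lemma stdPhi_surj {q : ℝ} (hq : q ∈ Ioo (0:ℝ) 1) : ∃ x, stdPhi x = q := by
  obtain ⟨hq0, hq1⟩ := hq
  have hbot := aux_tendsto_Iic_atBot integrable_stdphi
  have htop := aux_tendsto_Iic_atTop integrable_stdphi
  rw [integral_stdphi] at htop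
  have h1 : ∀ᶠ x in atBot, stdPhi x < q := hbot.eventually_lt_const hq0
  have h2 : ∀ᶠ x in atTop, q < stdPhi x := htop.eventually_const_lt hq1
  obtain ⟨x₁, hx₁⟩ := h1.exists
  obtain ⟨x₂, hx₂⟩ := h2.exists
  have hx12 : x₁ ≤ x₂ := by
    by_contra h
    push_neg at h
    exact absurd (stdPhi_strictMono h) (by linarith)
  have := intermediate_value_Icc hx12 continuous_stdPhi.continuousOn
  have hmem : q ∈ Icc (stdPhi x₁) (stdPhi x₂) := ⟨hx₁.le, hx₂.le⟩
  obtain ⟨x, _, hx⟩ := this hmem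
  exact ⟨x, hx⟩

lemma stdPhi_stdPhiInv {q : ℝ} (hq : q ∈ Ioo (0:ℝ) 1) : stdPhi (stdPhiInv q) = q :=
  Function.invFun_eq (stdPhi_surj hq)

lemma hasDerivAt_stdPhiInv {q : ℝ} (hq : q ∈ Ioo (0:ℝ) 1) :
    HasDerivAt stdPhiInv (stdphi (stdPhiInv q))⁻¹ q :=
  aux_rightinv_hasDerivAt stdPhi_strictMono hq (fun p hp => stdPhi_stdPhiInv hp)
    (hasDerivAt_stdPhi _) (ne_of_gt (stdphi_pos _))

lemma stdphi_even (x : ℝ) : stdphi (-x) = stdphi x := by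
  simp [stdphi]

lemma stdPhiE_nonneg (c : EReal) (x s : ℝ) : 0 ≤ stdPhiE c x s := by
  unfold stdPhiE
  split_ifs <;> first | norm_num | skip
  exact (stdPhi_pos _).le

lemma stdPhiE_le_one (c : EReal) (x s : ℝ) : stdPhiE c x s ≤ 1 := by
  unfold stdPhiE
  split_ifs <;> first | norm_num | skip
  exact (stdPhi_lt_one _).le

lemma stdPhiE_lt {c d : EReal} (h : c < d) (x : ℝ) {s : ℝ} (hs : 0 < s) :
    stdPhiE c x s < stdPhiE d x s := by
  unfold stdPhiE
  rcases eq_or_ne c ⊤ with hc | hc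
  · exact absurd (hc ▸ h) (not_lt.2 le_top)
  rcases eq_or_ne d ⊥ with hd | hd
  · exact absurd (hd ▸ h) (not_lt.2 bot_le)
  rcases eq_or_ne c ⊥ with hc' | hc'
  · rcases eq_or_ne d ⊤ with hd' | hd'
    · simp [hc', hd']
    · simp only [hc', hd', hd]
      norm_num [stdPhi_pos]
  · rcases eq_or_ne d ⊤ with hd' | hd'
    · simp only [hc, hc', hd']
      norm_num [stdPhi_lt_one]
    · simp only [hc, hc', hd, hd']
      apply stdPhi_strictMono
      have hcd : c.toReal < d.toReal := by
        lift c to ℝ using ⟨hc, hc'⟩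
        lift d to ℝ using ⟨hd', hd⟩
        exact_mod_cast h
      exact div_lt_div_of_pos_right (by linarith) hs


lemma truncSum_pos {k : ℕ} {a b : Fin (k+1) → EReal} (hab : truncOrdered a b)
    {s : ℝ} (hs : 0 < s) (x : ℝ) : 0 < truncSum a b s x := by
  refine Finset.sum_pos (fun i _ => ?_) ⟨0, Finset.mem_univ 0⟩
  have := stdPhiE_lt (hab.1 i) x hs
  linarith

lemma truncSum_le {k : ℕ} (a b : Fin k → EReal) (s x : ℝ) :
    truncSum a b s x ≤ k := by
  calc truncSum a b s x ≤ ∑ _i : Fin k, (1:ℝ) := by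
        refine Finset.sum_le_sum fun i _ => ?_
        have h1 := stdPhiE_le_one (b i) x s
        have h2 := stdPhiE_nonneg (a i) x s
        linarith
    _ = k := by simp

/-- density term for extended endpoint: derivative of `x ↦ stdPhiE c x s` is `-(phiEa c x s)`. -/
noncomputable def phiEa (c : EReal) (x s : ℝ) : ℝ :=
  if c = ⊤ then 0 else if c = ⊥ then 0 else (1 / s) * stdphi ((c.toReal - x) / s)

lemma hasDerivAt_stdPhiE (c : EReal) (x : ℝ) {s : ℝ} (hs : s ≠ 0) :
    HasDerivAt (fun y => stdPhiE c y s) (-(phiEa c x s)) x := by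
  unfold stdPhiE phiEa
  split_ifs with h1 h2
  · simpa using hasDerivAt_const x (1:ℝ)
  · simpa using hasDerivAt_const x (0:ℝ)
  · have hinner : HasDerivAt (fun y : ℝ => (c.toReal - y) / s) (-(1/s)) x := by
      have := ((hasDerivAt_id x).const_sub c.toReal).div_const s
      simpa [neg_div] using this
    have := (hasDerivAt_stdPhi ((c.toReal - x)/s)).comp x hinner
    refine this.congr_deriv ?_
    ring

lemma hasDerivAt_truncSum {k : ℕ} (a b : Fin k → EReal) (x : ℝ) {s : ℝ} (hs : s ≠ 0) :
    HasDerivAt (fun y => truncSum a b s y)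
      (∑ i, (phiEa (a i) x s - phiEa (b i) x s)) x := by
  unfold truncSum
  refine HasDerivAt.fun_sum fun i _ => ?_
  have h1 := hasDerivAt_stdPhiE (b i) x hs
  have h2 := hasDerivAt_stdPhiE (a i) x hs
  refine (h1.sub h2).congr_deriv ?_
  ring

lemma continuous_truncSum {k : ℕ} (a b : Fin k → EReal) {s : ℝ} (hs : s ≠ 0) :
    Continuous (fun y => truncSum a b s y) := by
  have : Differentiable ℝ (fun y => truncSum a b s y) :=
    fun x => (hasDerivAt_truncSum a b x hs).differentiableAt
  exact this.continuous

section Sigma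
variable {σ τ : ℝ} (hσ : 0 < σ) (hτ : 0 < τ)
include hσ hτ

lemma aux_s_pos : 0 < Real.sqrt (σ^2 + τ^2) := Real.sqrt_pos.2 (by positivity)

lemma aux_s_sq : (Real.sqrt (σ^2 + τ^2))^2 = σ^2 + τ^2 := Real.sq_sqrt (by positivity)

lemma aux_rho_eq : Real.sqrt (τ^2 / (σ^2 + τ^2)) = τ / Real.sqrt (σ^2 + τ^2) := by
  rw [Real.sqrt_div (by positivity) _, Real.sqrt_sq hτ.le]

end Sigma

lemma aux_eq_of_deriv {f g d : ℝ → ℝ} (hf : ∀ x, HasDerivAt f (d x) x)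
    (hg : ∀ x, HasDerivAt g (d x) x)
    (hlim : Tendsto (fun x => f x - g x) atBot (𝓝 0)) (x : ℝ) : f x = g x := by
  have hd : ∀ t, HasDerivAt (fun u => f u - g u) 0 t := fun t => by
    have := (hf t).sub (hg t); rwa [sub_self] at this
  have hc : ∀ y z : ℝ, f y - g y = f z - g z := fun y z =>
    is_const_of_deriv_eq_zero (fun t => ((hd t).differentiableAt))
      (fun t => (hd t).deriv) y z
  have h1 : Tendsto (fun _ : ℝ => f x - g x) atBot (𝓝 0) :=
    hlim.congr fun y => hc y x
  have h2 := tendsto_nhds_unique h1 tendsto_const_nhds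
  linarith

lemma integrable_gauss_affine {w : ℝ} (hw : 0 < w) (m : ℝ) :
    Integrable (fun u => stdphi ((u - m) / w)) := by
  have h1 : Integrable (fun u : ℝ => stdphi (u / w)) := integrable_stdphi.comp_div hw.ne'
  have h2 := h1.comp_sub_right m
  simpa [sub_div] using h2

lemma continuous_gauss_affine (w m : ℝ) : Continuous (fun u => stdphi ((u - m) / w)) := by
  exact continuous_stdphi.comp ((continuous_id.sub continuous_const).div_const w)

lemma integral_gauss_affine {w : ℝ} (hw : 0 < w) (m : ℝ) :
    ∫ u, (1 / w) * stdphi ((u - m) / w) = 1 := by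
  rw [integral_const_mul]
  have h1 : ∫ u, stdphi ((u - m) / w) = ∫ u, stdphi (u / w) := by
    have := integral_sub_right_eq_self (μ := volume) (fun u : ℝ => stdphi (u / w)) m
    simpa [sub_div] using this
  rw [h1, Measure.integral_comp_div (fun y : ℝ => stdphi y) w, integral_stdphi]
  simp [abs_of_pos hw]
  field_simp

lemma tendsto_affine_atBot {w : ℝ} (hw : 0 < w) (m : ℝ) :
    Tendsto (fun x : ℝ => (x - m) / w) atBot atBot := by
  have h1 : Tendsto (fun x : ℝ => x - m) atBot atBot := by
    simpa [sub_eq_add_neg] using tendsto_atBot_add_const_right atBot (-m) tendsto_id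
  exact h1.atBot_div_const hw

lemma stdPhi_tendsto_atBot : Tendsto stdPhi atBot (𝓝 0) :=
  aux_tendsto_Iic_atBot integrable_stdphi

lemma integral_Iic_gauss_affine {w : ℝ} (hw : 0 < w) (m x : ℝ) :
    ∫ u in Iic x, (1 / w) * stdphi ((u - m) / w) = stdPhi ((x - m) / w) := by
  have hint : Integrable (fun u => (1 / w) * stdphi ((u - m) / w)) :=
    (integrable_gauss_affine hw m).const_mul _
  have hcont : Continuous (fun u => (1 / w) * stdphi ((u - m) / w)) :=
    continuous_const.mul (continuous_gauss_affine w m)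
  refine aux_eq_of_deriv (g := fun x => stdPhi ((x - m) / w)) (d := fun x => (1 / w) * stdphi ((x - m) / w))
    (fun x => aux_cdf_hasDerivAt hcont hint x) (fun x => ?_) ?_ x
  · have hinner : HasDerivAt (fun y : ℝ => (y - m) / w) (1 / w) x :=
      ((hasDerivAt_id x).sub_const m).div_const w
    have := (hasDerivAt_stdPhi ((x - m) / w)).comp x hinner
    refine this.congr_deriv ?_
    ring
  · have h1 : Tendsto (fun x => ∫ u in Iic x, (1 / w) * stdphi ((u - m) / w)) atBot (𝓝 0) :=
      aux_tendsto_Iic_atBot hint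
    have h2 : Tendsto (fun x : ℝ => stdPhi ((x - m) / w)) atBot (𝓝 0) :=
      stdPhi_tendsto_atBot.comp (tendsto_affine_atBot hw m)
    simpa using h1.sub h2

lemma stdphi_mul (u v : ℝ) :
    stdphi u * stdphi v = Real.exp (-(u ^ 2 + v ^ 2) / 2) / (2 * Real.pi) := by
  unfold stdphi
  rw [div_mul_div_comm, Real.mul_self_sqrt (by positivity), ← Real.exp_add]
  ring_nf

lemma aux_gauss_prod {σ τ : ℝ} (hσ : 0 < σ) (hτ : 0 < τ) (μ c x : ℝ) :
    (1 / σ) * stdphi ((x - μ) / σ) * ((1 / τ) * stdphi ((c - x) / τ))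
      = (1 / Real.sqrt (σ ^ 2 + τ ^ 2)) * stdphi ((c - μ) / Real.sqrt (σ ^ 2 + τ ^ 2))
        * ((1 / (σ * τ / Real.sqrt (σ ^ 2 + τ ^ 2)))
          * stdphi ((x - (τ ^ 2 / (σ ^ 2 + τ ^ 2) * μ + (1 - τ ^ 2 / (σ ^ 2 + τ ^ 2)) * c))
            / (σ * τ / Real.sqrt (σ ^ 2 + τ ^ 2)))) := by
  have hs : (0:ℝ) < Real.sqrt (σ ^ 2 + τ ^ 2) := aux_s_pos hσ hτ
  have hs2 : (Real.sqrt (σ ^ 2 + τ ^ 2)) ^ 2 = σ ^ 2 + τ ^ 2 := aux_s_sq hσ hτ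
  set s := Real.sqrt (σ ^ 2 + τ ^ 2) with hsdef
  set m := τ ^ 2 / (σ ^ 2 + τ ^ 2) * μ + (1 - τ ^ 2 / (σ ^ 2 + τ ^ 2)) * c with hm
  have hL : (1 / σ) * stdphi ((x - μ) / σ) * ((1 / τ) * stdphi ((c - x) / τ))
      = 1 / (σ * τ) * (stdphi ((x - μ) / σ) * stdphi ((c - x) / τ)) := by ring
  have hR : (1 / s) * stdphi ((c - μ) / s) * ((1 / (σ * τ / s)) * stdphi ((x - m) / (σ * τ / s)))
      = (1 / s) * (1 / (σ * τ / s)) * (stdphi ((c - μ) / s) * stdphi ((x - m) / (σ * τ / s))) := by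
    ring
  rw [hL, hR, stdphi_mul, stdphi_mul]
  have hcoef : (1 / s) * (1 / (σ * τ / s)) = 1 / (σ * τ) := by
    field_simp
  rw [hcoef]
  have hexp : ((x - μ) / σ) ^ 2 + ((c - x) / τ) ^ 2
      = ((c - μ) / s) ^ 2 + ((x - m) / (σ * τ / s)) ^ 2 := by
    have hv1 : ((c - μ) / s) ^ 2 = (c - μ) ^ 2 / (σ ^ 2 + τ ^ 2) := by
      rw [div_pow, hs2]
    have hv2 : ((x - m) / (σ * τ / s)) ^ 2 = (x - m) ^ 2 * (σ ^ 2 + τ ^ 2) / (σ * τ) ^ 2 := by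
      rw [div_pow, div_pow, hs2]
      field_simp
    rw [hv1, hv2, hm, div_pow]
    have h1 : σ ^ 2 ≠ 0 := by positivity
    have h2 : τ ^ 2 ≠ 0 := by positivity
    have h3 : σ ^ 2 + τ ^ 2 ≠ 0 := by positivity
    field_simp
    ring
  rw [hexp]

lemma integral_gauss_affine' {w : ℝ} (hw : 0 < w) (m : ℝ) :
    ∫ u, stdphi ((u - m) / w) = w := by
  have h := integral_gauss_affine hw m
  rw [integral_const_mul] at h
  have hw' : w ≠ 0 := hw.ne'
  field_simp at h
  linarith

lemma continuous_stdPhiE (c : EReal) {s : ℝ} (hs : s ≠ 0) :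
    Continuous (fun x => stdPhiE c x s) := by
  have : Differentiable ℝ (fun x => stdPhiE c x s) :=
    fun x => (hasDerivAt_stdPhiE c x hs).differentiableAt
  exact this.continuous

lemma integrable_gauss_mul_stdPhiE {σ τ : ℝ} (hσ : 0 < σ) (hτ : 0 < τ) (μ : ℝ) (c : EReal) :
    Integrable (fun x => (1 / σ) * stdphi ((x - μ) / σ) * stdPhiE c x τ) := by
  refine ((integrable_gauss_affine hσ μ).const_mul (1 / σ)).mono' ?_ ?_
  · exact ((continuous_const.mul (continuous_gauss_affine σ μ)).mul
      (continuous_stdPhiE c hτ.ne')).aestronglyMeasurable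
  · refine Eventually.of_forall fun x => ?_
    have hsp := (stdphi_pos ((x - μ) / σ)).le
    have h0 : (0:ℝ) ≤ (1 / σ) * stdphi ((x - μ) / σ) := by positivity
    rw [Real.norm_eq_abs, abs_mul, abs_of_nonneg h0]
    have h1 := stdPhiE_nonneg c x τ
    have h2 := stdPhiE_le_one c x τ
    rw [abs_of_nonneg h1]
    nlinarith

lemma aux_conv {σ τ : ℝ} (hσ : 0 < σ) (hτ : 0 < τ) (μ : ℝ) (c : EReal) :
    ∫ x, (1 / σ) * stdphi ((x - μ) / σ) * stdPhiE c x τ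
      = stdPhiE c μ (Real.sqrt (σ ^ 2 + τ ^ 2)) := by
  have hs : (0:ℝ) < Real.sqrt (σ ^ 2 + τ ^ 2) := aux_s_pos hσ hτ
  have hw : (0:ℝ) < σ * τ / Real.sqrt (σ ^ 2 + τ ^ 2) := by positivity
  have stdPhiE_top : ∀ x' s' : ℝ, stdPhiE ⊤ x' s' = 1 := fun _ _ => by simp [stdPhiE]
  have stdPhiE_bot : ∀ x' s' : ℝ, stdPhiE ⊥ x' s' = 0 := fun _ _ => by simp [stdPhiE]
  rcases eq_or_ne c ⊤ with hc | hc
  · subst hc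
    simp only [stdPhiE_top, mul_one]
    exact integral_gauss_affine hσ μ
  rcases eq_or_ne c ⊥ with hc' | hc'
  · subst hc'
    simp [stdPhiE]
  · set r := c.toReal with hr
    set F : ℝ → ℝ → ℝ :=
      fun x y => (1 / σ) * stdphi ((x - μ) / σ) * ((1 / τ) * stdphi ((y - x) / τ)) with hF
    have hPhi : ∀ x, stdPhiE c x τ = ∫ y in Iic r, (1 / τ) * stdphi ((y - x) / τ) := by
      intro x
      rw [integral_Iic_gauss_affine hτ x r]
      simp [stdPhiE, hc, hc', hr]
    have hFcont : Continuous (Function.uncurry F) := by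
      apply Continuous.mul
      · exact (continuous_const.mul
          (continuous_stdphi.comp ((continuous_fst.sub continuous_const).div_const σ)))
      · exact continuous_const.mul
          (continuous_stdphi.comp ((continuous_snd.sub continuous_fst).div_const τ))
    have hFnonneg : ∀ x y, 0 ≤ F x y := fun x y => by
      have := stdphi_pos ((x - μ) / σ); have := stdphi_pos ((y - x) / τ); positivity
    have hFxint : ∀ x, Integrable (fun y => F x y) (volume.restrict (Iic r)) := by
      intro x
      exact (((integrable_gauss_affine hτ x).const_mul (1 / τ)).const_mul _).restrict
    have hFint : Integrable (Function.uncurry F) (volume.prod (volume.restrict (Iic r))) := by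
      rw [MeasureTheory.integrable_prod_iff hFcont.aestronglyMeasurable]
      simp only [Function.uncurry_apply_pair]
      constructor
      · exact Eventually.of_forall fun x => hFxint x
      · have heq : (fun x => ∫ y in Iic r, ‖F x y‖)
            = fun x => (1 / σ) * stdphi ((x - μ) / σ) * stdPhiE c x τ := by
          funext x
          have : ∀ y, ‖F x y‖ = F x y := fun y => Real.norm_of_nonneg (hFnonneg x y)
          simp_rw [this]
          simp only [hF]
          rw [integral_const_mul, ← hPhi x]
        rw [heq]
        exact integrable_gauss_mul_stdPhiE hσ hτ μ c
    have hswap := MeasureTheory.integral_integral_swap hFint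
    have hLHS : ∫ x, (1 / σ) * stdphi ((x - μ) / σ) * stdPhiE c x τ
        = ∫ x, ∫ y in Iic r, F x y := by
      congr 1; funext x
      rw [hPhi x, ← integral_const_mul]
    rw [hLHS, hswap]
    have hinner : ∀ y, (∫ x, F x y)
        = (1 / Real.sqrt (σ ^ 2 + τ ^ 2)) * stdphi ((y - μ) / Real.sqrt (σ ^ 2 + τ ^ 2)) := by
      intro y
      have hrw : ∀ x, F x y
          = (1 / Real.sqrt (σ ^ 2 + τ ^ 2)) * stdphi ((y - μ) / Real.sqrt (σ ^ 2 + τ ^ 2))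
            * ((1 / (σ * τ / Real.sqrt (σ ^ 2 + τ ^ 2)))
              * stdphi ((x - (τ ^ 2 / (σ ^ 2 + τ ^ 2) * μ + (1 - τ ^ 2 / (σ ^ 2 + τ ^ 2)) * y))
                / (σ * τ / Real.sqrt (σ ^ 2 + τ ^ 2)))) := fun x => aux_gauss_prod hσ hτ μ y x
      simp_rw [hrw, integral_const_mul, integral_gauss_affine' hw]
      field_simp
    simp_rw [hinner]
    rw [integral_Iic_gauss_affine hs μ r]
    simp [stdPhiE, hc, hc', hr]

lemma continuous_condPDF {k : ℕ} (a b : Fin k → EReal) {σ τ : ℝ} (hτ : 0 < τ) (μ : ℝ) :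
    Continuous (condPDF a b σ τ μ) := by
  unfold condPDF
  exact ((continuous_const.mul (continuous_gauss_affine σ μ)).mul
    (continuous_truncSum a b (ne_of_gt hτ))).div_const _

section PDF
variable {k : ℕ} {a b : Fin (k+1) → EReal} (hab : truncOrdered a b)
  {σ τ : ℝ} (hσ : 0 < σ) (hτ : 0 < τ) (μ : ℝ)

include hab hσ hτ

lemma condPDF_pos (x : ℝ) : 0 < condPDF a b σ τ μ x := by
  have h1 := truncSum_pos hab hτ x
  have h2 := truncSum_pos hab (aux_s_pos hσ hτ) μ
  have h3 := stdphi_pos ((x - μ) / σ)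
  unfold condPDF
  positivity

lemma integrable_condPDF : Integrable (condPDF a b σ τ μ) := by
  set S := truncSum a b (Real.sqrt (σ ^ 2 + τ ^ 2)) μ with hS
  have hSpos : 0 < S := truncSum_pos hab (aux_s_pos hσ hτ) μ
  have hg : Integrable (fun x => (1 / σ) * stdphi ((x - μ) / σ) * (k+1) / S) :=
    (((integrable_gauss_affine hσ μ).const_mul (1 / σ)).mul_const _).div_const _
  refine hg.mono' ((continuous_condPDF a b hτ μ).aestronglyMeasurable) ?_
  refine Eventually.of_forall fun x => ?_
  have hf := condPDF_pos hab hσ hτ μ x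
  rw [Real.norm_of_nonneg hf.le]
  unfold condPDF
  have hb := truncSum_le a b τ x
  have hφ := (stdphi_pos ((x - μ) / σ)).le
  rw [div_le_div_iff_of_pos_right hSpos]
  have h0 : 0 ≤ (1 / σ) * stdphi ((x - μ) / σ) := by positivity
  push_cast at hb
  nlinarith

lemma integral_condPDF : ∫ x, condPDF a b σ τ μ x = 1 := by
  set s := Real.sqrt (σ ^ 2 + τ ^ 2) with hs
  set S := truncSum a b s μ with hS
  have hSpos : 0 < S := truncSum_pos hab (aux_s_pos hσ hτ) μ
  have hrw : ∀ x, condPDF a b σ τ μ x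
      = (∑ i, ((1 / σ) * stdphi ((x - μ) / σ) * stdPhiE (b i) x τ
          - (1 / σ) * stdphi ((x - μ) / σ) * stdPhiE (a i) x τ)) / S := by
    intro x
    simp only [condPDF, truncSum, Finset.mul_sum, mul_sub, hS, hs]
  simp_rw [hrw, integral_div]
  rw [integral_finset_sum (μ := volume) Finset.univ
    (f := fun i x => ((1 / σ) * stdphi ((x - μ) / σ) * stdPhiE (b i) x τ
          - (1 / σ) * stdphi ((x - μ) / σ) * stdPhiE (a i) x τ))
    (fun i _ => ((integrable_gauss_mul_stdPhiE hσ hτ μ (b i)).sub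
      (integrable_gauss_mul_stdPhiE hσ hτ μ (a i))))]
  have : ∀ i : Fin (k+1), (∫ x, ((1 / σ) * stdphi ((x - μ) / σ) * stdPhiE (b i) x τ
      - (1 / σ) * stdphi ((x - μ) / σ) * stdPhiE (a i) x τ))
      = stdPhiE (b i) μ s - stdPhiE (a i) μ s := by
    intro i
    rw [integral_sub (integrable_gauss_mul_stdPhiE hσ hτ μ (b i))
      (integrable_gauss_mul_stdPhiE hσ hτ μ (a i)),
      aux_conv hσ hτ μ (b i), aux_conv hσ hτ μ (a i)]
  simp_rw [this]
  rw [show (∑ i, (stdPhiE (b i) μ s - stdPhiE (a i) μ s)) = S from rfl]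
  field_simp

lemma hasDerivAt_Fmu (x : ℝ) :
    HasDerivAt (Fmu a b σ τ μ) (condPDF a b σ τ μ x) x :=
  aux_cdf_hasDerivAt (continuous_condPDF a b hτ μ) (integrable_condPDF hab hσ hτ μ) x

lemma Fmu_strictMono : StrictMono (Fmu a b σ τ μ) :=
  aux_cdf_strictMono (continuous_condPDF a b hτ μ) (condPDF_pos hab hσ hτ μ)
    (integrable_condPDF hab hσ hτ μ)

lemma Fmu_mem_Ioo (x : ℝ) : Fmu a b σ τ μ x ∈ Ioo (0:ℝ) 1 := by
  constructor
  · exact aux_cdf_pos (continuous_condPDF a b hτ μ) (condPDF_pos hab hσ hτ μ)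
      (integrable_condPDF hab hσ hτ μ) x
  · have := aux_cdf_lt (continuous_condPDF a b hτ μ) (condPDF_pos hab hσ hτ μ)
      (integrable_condPDF hab hσ hτ μ) x
    rwa [integral_condPDF hab hσ hτ μ] at this

end PDF


/-! ### Derivatives of the components of `Bfun` -/

noncomputable def GdE (σ τ μ x : ℝ) (c : EReal) : ℝ :=
  if c = ⊤ then 0 else if c = ⊥ then 0 else
    (1 / (σ * τ / Real.sqrt (σ ^ 2 + τ ^ 2)))
      * stdphi ((x - (τ ^ 2 / (σ ^ 2 + τ ^ 2) * μ + (1 - τ ^ 2 / (σ ^ 2 + τ ^ 2)) * c.toReal))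
        / (σ * τ / Real.sqrt (σ ^ 2 + τ ^ 2)))

lemma aux_sigrho {σ τ : ℝ} (hσ : 0 < σ) (hτ : 0 < τ) :
    σ * Real.sqrt (τ ^ 2 / (σ ^ 2 + τ ^ 2)) = σ * τ / Real.sqrt (σ ^ 2 + τ ^ 2) := by
  rw [aux_rho_eq hσ hτ]; ring

lemma hasDerivAt_GfunE {σ τ : ℝ} (hσ : 0 < σ) (hτ : 0 < τ) (μ : ℝ) (c : EReal) (x : ℝ) :
    HasDerivAt (fun y => GfunE σ τ μ y c) (GdE σ τ μ x c) x := by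
  unfold GfunE GdE Gfun
  split_ifs with h1 h2
  · simpa using hasDerivAt_const x (0:ℝ)
  · simpa using hasDerivAt_const x (1:ℝ)
  · set w := σ * τ / Real.sqrt (σ ^ 2 + τ ^ 2) with hw
    have hwpos : 0 < w := by
      have := aux_s_pos hσ hτ; rw [hw]; positivity
    set m := τ ^ 2 / (σ ^ 2 + τ ^ 2) * μ + (1 - τ ^ 2 / (σ ^ 2 + τ ^ 2)) * c.toReal with hm
    have hrw : (fun y => stdPhi ((y - m) / (σ * Real.sqrt (τ ^ 2 / (σ ^ 2 + τ ^ 2)))))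
        = fun y => stdPhi ((y - m) / w) := by
      funext y; rw [aux_sigrho hσ hτ]
    rw [hrw]
    have hinner : HasDerivAt (fun y : ℝ => (y - m) / w) (1 / w) x :=
      ((hasDerivAt_id x).sub_const m).div_const w
    have := (hasDerivAt_stdPhi ((x - m) / w)).comp x hinner
    refine this.congr_deriv ?_
    ring

section Assemble
variable {k : ℕ} {a b : Fin (k+1) → EReal} (hab : truncOrdered a b)
  {σ τ : ℝ} (hσ : 0 < σ) (hτ : 0 < τ) (μ : ℝ)

include hσ hτ

lemma aux_h_Gd (c : EReal) (x : ℝ) :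
    hfunE a b σ τ μ c * GdE σ τ μ x c
      = (1 / σ) * stdphi ((x - μ) / σ) * phiEa c x τ
        / truncSum a b (Real.sqrt (σ ^ 2 + τ ^ 2)) μ := by
  rcases eq_or_ne c ⊤ with hc | hc
  · simp [hc, hfunE, GdE, phiEa]
  rcases eq_or_ne c ⊥ with hc' | hc'
  · simp [hc', hfunE, GdE, phiEa]
  · unfold hfunE GdE phiEa hfun
    rw [if_neg hc, if_neg hc', if_neg hc, if_neg hc', if_neg hc, if_neg hc']
    set s := Real.sqrt (σ ^ 2 + τ ^ 2) with hs
    set S := truncSum a b s μ with hS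
    set w := σ * τ / s with hw
    set m := τ ^ 2 / (σ ^ 2 + τ ^ 2) * μ + (1 - τ ^ 2 / (σ ^ 2 + τ ^ 2)) * c.toReal with hm
    have hid := aux_gauss_prod hσ hτ μ c.toReal x
    calc (1 / s) * stdphi ((c.toReal - μ) / s) / S * ((1 / w) * stdphi ((x - m) / w))
        = ((1 / s) * stdphi ((c.toReal - μ) / s) * ((1 / w) * stdphi ((x - m) / w))) / S := by
          ring
      _ = ((1 / σ) * stdphi ((x - μ) / σ) * ((1 / τ) * stdphi ((c.toReal - x) / τ))) / S := by
          rw [← hid]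
      _ = (1 / σ) * stdphi ((x - μ) / σ) * ((1 / τ) * stdphi ((c.toReal - x) / τ)) / S := by
          ring

include hab

lemma hasDerivAt_condPDF (x : ℝ) :
    HasDerivAt (condPDF a b σ τ μ)
      ((-(x - μ) / σ ^ 2) * condPDF a b σ τ μ x
        + (1 / σ) * stdphi ((x - μ) / σ) * (∑ i, (phiEa (a i) x τ - phiEa (b i) x τ))
          / truncSum a b (Real.sqrt (σ ^ 2 + τ ^ 2)) μ) x := by
  set S := truncSum a b (Real.sqrt (σ ^ 2 + τ ^ 2)) μ with hS
  have hSpos : 0 < S := truncSum_pos hab (aux_s_pos hσ hτ) μ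
  have hg : HasDerivAt (fun y => (1 / σ) * stdphi ((y - μ) / σ))
      ((1 / σ) * (-(((x - μ) / σ)) * stdphi ((x - μ) / σ)) * (1 / σ)) x := by
    have hinner : HasDerivAt (fun y : ℝ => (y - μ) / σ) (1 / σ) x :=
      ((hasDerivAt_id x).sub_const μ).div_const σ
    have := ((hasDerivAt_stdphi ((x - μ) / σ)).comp x hinner).const_mul (1 / σ)
    refine this.congr_deriv ?_
    ring
  have hT := hasDerivAt_truncSum a b x hτ.ne'
  have hprod := hg.mul hT
  have := hprod.div_const S
  have hcond : condPDF a b σ τ μ = fun y =>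
      (1 / σ) * stdphi ((y - μ) / σ) * truncSum a b τ y / S := by
    funext y; rfl
  simp only [hcond]
  refine this.congr_deriv ?_
  field_simp

lemma hasDerivAt_phiinvF (x : ℝ) :
    HasDerivAt (fun y => stdphi (stdPhiInv (Fmu a b σ τ μ y)))
      (-stdPhiInv (Fmu a b σ τ μ x) * condPDF a b σ τ μ x) x := by
  have h1 := hasDerivAt_Fmu hab hσ hτ μ x
  have h2 := hasDerivAt_stdPhiInv (Fmu_mem_Ioo hab hσ hτ μ x)
  have h3 := hasDerivAt_stdphi (stdPhiInv (Fmu a b σ τ μ x))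
  have := h3.comp x (h2.comp x h1)
  refine this.congr_deriv ?_
  have hφpos := stdphi_pos (stdPhiInv (Fmu a b σ τ μ x))
  field_simp

lemma hasDerivAt_Bfun (x : ℝ) :
    HasDerivAt (Bfun a b σ τ μ)
      (Real.sqrt (τ ^ 2 / (σ ^ 2 + τ ^ 2)) / σ
          * (-stdPhiInv (Fmu a b σ τ μ x) * condPDF a b σ τ μ x)
        - ((-(x - μ) / σ ^ 2) * condPDF a b σ τ μ x
            + (1 / σ) * stdphi ((x - μ) / σ) * (∑ i, (phiEa (a i) x τ - phiEa (b i) x τ))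
              / truncSum a b (Real.sqrt (σ ^ 2 + τ ^ 2)) μ)
        + ∑ i, (hfunE a b σ τ μ (b i) * (condPDF a b σ τ μ x - GdE σ τ μ x (b i))
            - hfunE a b σ τ μ (a i) * (condPDF a b σ τ μ x - GdE σ τ μ x (a i)))) x := by
  unfold Bfun
  refine HasDerivAt.add (HasDerivAt.sub ?_ ?_) ?_
  · exact (hasDerivAt_phiinvF hab hσ hτ μ x).const_mul _
  · exact hasDerivAt_condPDF hab hσ hτ μ x
  · refine HasDerivAt.fun_sum fun i _ => ?_
    have hF := hasDerivAt_Fmu hab hσ hτ μ x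
    have hGb := hasDerivAt_GfunE hσ hτ μ (b i) x
    have hGa := hasDerivAt_GfunE hσ hτ μ (a i) x
    exact ((hF.sub hGb).const_mul _).sub ((hF.sub hGa).const_mul _)

lemma Bderiv_eq {ρ : ℝ} (hρ : 0 < ρ) (hρ2 : ρ ^ 2 = τ ^ 2 / (σ ^ 2 + τ ^ 2)) (x : ℝ) :
    (Real.sqrt (τ ^ 2 / (σ ^ 2 + τ ^ 2)) / σ
          * (-stdPhiInv (Fmu a b σ τ μ x) * condPDF a b σ τ μ x)
        - ((-(x - μ) / σ ^ 2) * condPDF a b σ τ μ x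
            + (1 / σ) * stdphi ((x - μ) / σ) * (∑ i, (phiEa (a i) x τ - phiEa (b i) x τ))
              / truncSum a b (Real.sqrt (σ ^ 2 + τ ^ 2)) μ)
        + ∑ i, (hfunE a b σ τ μ (b i) * (condPDF a b σ τ μ x - GdE σ τ μ x (b i))
            - hfunE a b σ τ μ (a i) * (condPDF a b σ τ μ x - GdE σ τ μ x (a i))))
      = condPDF a b σ τ μ x * (-(ρ / σ) * stdPhiInv (Fmu a b σ τ μ x) + (x - μ) / σ ^ 2
          + ∑ i, (hfunE a b σ τ μ (b i) - hfunE a b σ τ μ (a i))) := by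
  have hrho : Real.sqrt (τ ^ 2 / (σ ^ 2 + τ ^ 2)) = ρ := by
    rw [← hρ2, Real.sqrt_sq hρ.le]
  rw [hrho]
  set S := truncSum a b (Real.sqrt (σ ^ 2 + τ ^ 2)) μ with hS
  set f := condPDF a b σ τ μ x with hf
  set A := (1 / σ) * stdphi ((x - μ) / σ) with hA
  have hsum1 : ∑ i, (hfunE a b σ τ μ (b i) * (f - GdE σ τ μ x (b i))
      - hfunE a b σ τ μ (a i) * (f - GdE σ τ μ x (a i)))
      = (∑ i, (hfunE a b σ τ μ (b i) - hfunE a b σ τ μ (a i))) * f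
        - ∑ i, (A * phiEa (b i) x τ / S - A * phiEa (a i) x τ / S) := by
    rw [Finset.sum_mul, ← Finset.sum_sub_distrib]
    refine Finset.sum_congr rfl fun i _ => ?_
    rw [← aux_h_Gd hσ hτ μ (b i) x, ← aux_h_Gd hσ hτ μ (a i) x]
    ring
  rw [hsum1]
  have hsum2 : ∑ i, (A * phiEa (b i) x τ / S - A * phiEa (a i) x τ / S)
      = -(A * (∑ i, (phiEa (a i) x τ - phiEa (b i) x τ)) / S) := by
    rw [Finset.mul_sum, Finset.sum_div, ← Finset.sum_neg_distrib]
    refine Finset.sum_congr rfl fun i _ => ?_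
    ring
  rw [hsum2]
  ring

end Assemble

/-- The map `q ↦ B_μ(F_μ⁻¹(q))` is twice differentiable on `(0,1)`; its second derivative at
`q = F_μ(x)` equals `-ρ/(σ φ(Φ⁻¹(F_μ(x)))) + 1/(σ² f_μ(x))`. -/
theorem stmt12 {k : ℕ} (a b : Fin (k + 1) → EReal) (hab : truncOrdered a b)
    (σ τ ρ : ℝ) (hσ : 0 < σ) (hτ : 0 < τ)
    (hρ : 0 < ρ) (hρ2 : ρ ^ 2 = τ ^ 2 / (σ ^ 2 + τ ^ 2)) (μ : ℝ)
    (Finv : ℝ → ℝ) (hFinv : ∀ q ∈ Ioo (0 : ℝ) 1, Fmu a b σ τ μ (Finv q) = q) :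
    ∃ D : ℝ → ℝ,
      (∀ q ∈ Ioo (0 : ℝ) 1, HasDerivAt (fun p => Bfun a b σ τ μ (Finv p)) (D q) q) ∧
      ∀ x : ℝ,
        HasDerivAt D
          (-(ρ / (σ * stdphi (stdPhiInv (Fmu a b σ τ μ x))))
            + 1 / (σ ^ 2 * condPDF a b σ τ μ x)) (Fmu a b σ τ μ x) := by
  have hSM : StrictMono (Fmu a b σ τ μ) := Fmu_strictMono hab hσ hτ μ
  have hmem : ∀ x, Fmu a b σ τ μ x ∈ Ioo (0:ℝ) 1 := Fmu_mem_Ioo hab hσ hτ μ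
  have hfpos : ∀ x, 0 < condPDF a b σ τ μ x := condPDF_pos hab hσ hτ μ
  have hFinvd : ∀ q ∈ Ioo (0:ℝ) 1, HasDerivAt Finv (condPDF a b σ τ μ (Finv q))⁻¹ q :=
    fun q hq => aux_rightinv_hasDerivAt hSM hq hFinv
      (hasDerivAt_Fmu hab hσ hτ μ (Finv q)) (hfpos (Finv q)).ne'
  have hFinvF : ∀ x, Finv (Fmu a b σ τ μ x) = x := fun x => hSM.injective (hFinv _ (hmem x))
  refine ⟨fun q => -(ρ/σ) * stdPhiInv q + (Finv q - μ)/σ^2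
      + ∑ i, (hfunE a b σ τ μ (b i) - hfunE a b σ τ μ (a i)), ?_, ?_⟩
  · intro q hq
    have hB := hasDerivAt_Bfun hab hσ hτ μ (Finv q)
    have hcomp := hB.comp q (hFinvd q hq)
    rw [Bderiv_eq hab hσ hτ μ hρ hρ2 (Finv q)] at hcomp
    refine hcomp.congr_deriv ?_
    rw [hFinv q hq]
    have hne := (hfpos (Finv q)).ne'
    field_simp
  · intro x
    have hq := hmem x
    have h1 : HasDerivAt (fun q => -(ρ/σ) * stdPhiInv q)
        (-(ρ/σ) * (stdphi (stdPhiInv (Fmu a b σ τ μ x)))⁻¹) (Fmu a b σ τ μ x) :=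
      (hasDerivAt_stdPhiInv hq).const_mul _
    have h2 : HasDerivAt (fun q => (Finv q - μ)/σ^2)
        ((condPDF a b σ τ μ (Finv (Fmu a b σ τ μ x)))⁻¹ / σ^2) (Fmu a b σ τ μ x) :=
      ((hFinvd _ hq).sub_const μ).div_const _
    have h3 := (h1.add h2).add_const
      (∑ i, (hfunE a b σ τ μ (b i) - hfunE a b σ τ μ (a i)))
    refine h3.congr_deriv ?_
    rw [hFinvF x]
    have hφ := (stdphi_pos (stdPhiInv (Fmu a b σ τ μ x))).ne'
    have hfx := (hfpos x).ne'
    field_simp
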